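/- Let n ≥ 1, μ_1 ≥ … ≥ μ_n > 0 with μ_1 + … + μ_n = 1, let M = μ_1 and δ > 0. Suppose X_2 = … = X_n = 1 almost surely, and X_1 is independent of them with P(X_1 = (δ+M)/M) = M/(δ+M) and P(X_1 = 0) = δ/(δ+M). Then each X_i is non-negative with expectation 1, and P(∑_{i=1}^n μ_i X_i < 1+δ) = δ/(δ+M). (Hence equality can hold in Feige's conjectured bound.) -/

import Mathlib

open MeasureTheory ProbabilityTheory

/-- Equality can hold in Feige's conjectured bound: the example where
`X_2 = … = X_n = 1` and `X_1` is a suitable two-valued random variable. -/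
theorem feige_equality_example
    (Ω : Type) (_ : MeasurableSpace Ω) (P : Measure Ω) (hP : IsProbabilityMeasure P)
    (n : ℕ) (hn : 0 < n) (μ : Fin n → ℝ) (hanti : Antitone μ) (hpos : ∀ i, 0 < μ i)
    (hsum : ∑ i, μ i = 1) (δ : ℝ) (hδ : 0 < δ)
    (X : Fin n → Ω → ℝ) (hmeas : ∀ i, Measurable (X i))
    (hindep : iIndepFun X P)
    (hone : ∀ i : Fin n, i ≠ ⟨0, hn⟩ → ∀ᵐ ω ∂P, X i ω = 1)
    (htop : P {ω | X ⟨0, hn⟩ ω = (δ + μ ⟨0, hn⟩) / μ ⟨0, hn⟩} =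
      ENNReal.ofReal (μ ⟨0, hn⟩ / (δ + μ ⟨0, hn⟩)))
    (hzero : P {ω | X ⟨0, hn⟩ ω = 0} = ENNReal.ofReal (δ / (δ + μ ⟨0, hn⟩))) :
    (∀ i, ∀ᵐ ω ∂P, 0 ≤ X i ω) ∧ (∀ i, ∫ ω, X i ω ∂P = 1) ∧
      (P {ω | ∑ i, μ i * X i ω < 1 + δ}).toReal = δ / (δ + μ ⟨0, hn⟩) := by
  set i0 : Fin n := ⟨0, hn⟩ with hi0
  set M : ℝ := μ i0 with hMdef
  have hMpos : 0 < M := hpos i0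
  have hδM : 0 < δ + M := by linarith
  set a : ℝ := (δ + M) / M with ha
  have hapos : 0 < a := div_pos hδM hMpos
  have hAmeas : MeasurableSet {ω | X i0 ω = a} :=
    (hmeas i0) (measurableSet_singleton a)
  have hBmeas : MeasurableSet {ω | X i0 ω = 0} :=
    (hmeas i0) (measurableSet_singleton 0)
  have hdisj : Disjoint {ω | X i0 ω = a} {ω | X i0 ω = 0} := by
    rw [Set.disjoint_left]
    intro ω h1 h2
    simp only [Set.mem_setOf_eq] at h1 h2
    rw [h2] at h1
    exact absurd h1.symm (ne_of_gt hapos)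
  have hunion : P ({ω | X i0 ω = a} ∪ {ω | X i0 ω = 0}) = 1 := by
    rw [measure_union hdisj hBmeas, htop, hzero,
      ← ENNReal.ofReal_add (by positivity) (by positivity)]
    have : M / (δ + M) + δ / (δ + M) = 1 := by field_simp; ring
    rw [this, ENNReal.ofReal_one]
  have hae : ∀ᵐ ω ∂P, X i0 ω = a ∨ X i0 ω = 0 := by
    rw [ae_iff]
    have hset : {ω | ¬(X i0 ω = a ∨ X i0 ω = 0)} =
        ({ω | X i0 ω = a} ∪ {ω | X i0 ω = 0})ᶜ := by
      ext ω; simp [not_or]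
    rw [hset, measure_compl (hAmeas.union hBmeas) (measure_ne_top P _), hunion,
      measure_univ, tsub_self]
  refine ⟨?_, ?_, ?_⟩
  · intro i
    by_cases h : i = i0
    · subst h
      filter_upwards [hae] with ω hω
      rcases hω with h | h <;> rw [h]
      exact le_of_lt hapos
    · filter_upwards [hone i h] with ω hω
      rw [hω]; norm_num
  · intro i
    by_cases h : i = i0
    · subst h
      have heq : X i0 =ᵐ[P] ({ω | X i0 ω = a}).indicator (fun _ => a) := by
        filter_upwards [hae] with ω hω
        rcases hω with h | h
        · rw [Set.indicator_of_mem (show ω ∈ {ω | X i0 ω = a} from h), h]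
        · rw [Set.indicator_of_notMem
            (show ω ∉ {ω | X i0 ω = a} from fun hc => by
              rw [Set.mem_setOf_eq, h] at hc
              exact absurd hc.symm (ne_of_gt hapos)), h]
      rw [integral_congr_ae heq, integral_indicator_const _ hAmeas, measureReal_def, htop,
        ENNReal.toReal_ofReal (by positivity)]
      rw [smul_eq_mul, ha]
      field_simp
    · rw [integral_congr_ae (hone i h)]
      simp
  · have h1 : ∀ᵐ ω ∂P, ∀ i : Fin n, i ≠ i0 → X i ω = 1 := by
      rw [ae_all_iff]
      intro i
      by_cases h : i = i0
      · filter_upwards with ω hi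
        exact absurd h hi
      · filter_upwards [hone i h] with ω hω _
        exact hω
    have hsum' : ∑ j ∈ Finset.univ.erase i0, μ j = 1 - M := by
      have h2 := Finset.add_sum_erase Finset.univ μ (Finset.mem_univ i0)
      rw [hsum] at h2
      linarith
    have hEB : {ω | ∑ i, μ i * X i ω < 1 + δ} =ᵐ[P] {ω | X i0 ω = 0} := by
      rw [Filter.eventuallyEq_set]
      filter_upwards [hae, h1] with ω hω h1ω
      have hval : ∑ i, μ i * X i ω = M * X i0 ω + (1 - M) := by
        rw [← Finset.add_sum_erase Finset.univ (fun i => μ i * X i ω)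
          (Finset.mem_univ i0)]
        congr 1
        rw [Finset.sum_congr rfl
          (fun i hi => by rw [h1ω i (Finset.ne_of_mem_erase hi), mul_one]), hsum']
      rw [hval]
      have hMa : M * a = δ + M := by
        rw [ha]; field_simp
      rcases hω with h | h
      · rw [h, hMa]
        constructor
        · intro hc; linarith
        · intro h0; exact absurd h0 (ne_of_gt hapos)
      · rw [h]
        constructor
        · intro _; rfl
        · intro _; nlinarith
    rw [measure_congr hEB, hzero, ENNReal.toReal_ofReal (by positivity)]
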